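/- Let χ : ℝ^{2d} → ℝ^{2d} be a measure-preserving bi-Lipschitz bijection, let K : ℝ^{2d} × ℝ^{2d} → ℂ satisfy |K(w,z)| ≤ C exp(−ε|w − χ(z)|) for some C, ε > 0, and let v be a weight on ℝ^{2d} with m v-moderate (m(z+ζ) ≤ C₀ v(z) m(ζ)) and ∫ v(z) e^{−ε|z|} dz < ∞. Then the integral operator M[G](w) = ∫ K(w,z) G(z) dz is bounded from L^p_{m∘χ}(ℝ^{2d}) to L^p_m(ℝ^{2d}) for every 1 ≤ p ≤ ∞. -/

import Mathlib

open Real MeasureTheory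
open scoped ENNReal

private lemma schur_step {n : ℕ} (g F : EuclideanSpace ℝ (Fin n) → ℝ≥0∞)
    (hg : Measurable g) (hF : Measurable F)
    (hI0 : ∫⁻ u, g u ≠ 0) (hItop : ∫⁻ u, g u ≠ ⊤)
    {r : ℝ} (hr : 1 ≤ r) :
    ∫⁻ w, (∫⁻ u, g (w - u) * F u) ^ r ≤ (∫⁻ u, g u) ^ r * ∫⁻ u, (F u) ^ r := by
  have hr0 : (0:ℝ) < r := lt_of_lt_of_le one_pos hr
  have hshift_left : ∀ w : EuclideanSpace ℝ (Fin n), ∫⁻ u, g (w - u) = ∫⁻ u, g u :=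
    fun w => (Measure.measurePreserving_sub_left volume w).lintegral_comp hg
  have hshift_right : ∀ u : EuclideanSpace ℝ (Fin n), ∫⁻ w, g (w - u) = ∫⁻ u, g u :=
    fun u => (MeasureTheory.measurePreserving_sub_right volume u).lintegral_comp hg
  have tonelli : ∀ F' : EuclideanSpace ℝ (Fin n) → ℝ≥0∞, Measurable F' →
      ∫⁻ w, ∫⁻ u, g (w - u) * F' u = (∫⁻ u, g u) * ∫⁻ u, F' u := by
    intro F' hF'
    have hm : Measurable fun p : EuclideanSpace ℝ (Fin n) × EuclideanSpace ℝ (Fin n) =>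
        g (p.1 - p.2) * F' p.2 :=
      (hg.comp (measurable_fst.sub measurable_snd)).mul (hF'.comp measurable_snd)
    rw [lintegral_lintegral_swap hm.aemeasurable]
    calc ∫⁻ u, ∫⁻ w, g (w - u) * F' u
        = ∫⁻ u, (∫⁻ w, g (w - u)) * F' u := by
          refine lintegral_congr fun u => ?_
          exact lintegral_mul_const _ (hg.comp (measurable_id.sub measurable_const))
      _ = ∫⁻ u, (∫⁻ u, g u) * F' u := by
          refine lintegral_congr fun u => ?_
          rw [hshift_right u]
      _ = (∫⁻ u, g u) * ∫⁻ u, F' u := lintegral_const_mul' _ _ hItop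
  rcases eq_or_lt_of_le hr with hr1 | hr1
  · simp only [← hr1, ENNReal.rpow_one]
    exact (tonelli F hF).le
  · have hq := Real.HolderConjugate.conjExponent hr1
    set q := Real.conjExponent r with hqdef
    have hq0 : (0:ℝ) < q := hq.symm.pos
    have hpt : ∀ w, (∫⁻ u, g (w - u) * F u) ^ r ≤
        (∫⁻ u, g u) ^ (r - 1) * ∫⁻ u, g (w - u) * (F u) ^ r := by
      intro w
      have hgm : Measurable fun u : EuclideanSpace ℝ (Fin n) => g (w - u) :=
        hg.comp (measurable_const.sub measurable_id)
      have hhold := ENNReal.lintegral_mul_le_Lp_mul_Lq volume hq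
        (f := fun u => (g (w - u)) ^ (1/r) * F u) (g := fun u => (g (w - u)) ^ (1/q))
        ((hgm.pow_const _).mul hF).aemeasurable (hgm.pow_const _).aemeasurable
      have heq1 : (fun u => ((g (w - u)) ^ (1/r) * F u) * (g (w - u)) ^ (1/q))
          = fun u => g (w - u) * F u := by
        funext u
        rw [mul_right_comm, ← ENNReal.rpow_add_of_nonneg _ _ (by positivity) (by positivity),
          one_div, one_div, hq.inv_add_inv_eq_one, ENNReal.rpow_one]
      have heq2 : ∀ u, ((g (w - u)) ^ (1/r) * F u) ^ r = g (w - u) * (F u) ^ r := by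
        intro u
        rw [ENNReal.mul_rpow_of_nonneg _ _ hr0.le, ← ENNReal.rpow_mul, one_div,
          inv_mul_cancel₀ hr0.ne', ENNReal.rpow_one]
      have heq3 : ∀ u, ((g (w - u)) ^ (1/q)) ^ q = g (w - u) := by
        intro u
        rw [← ENNReal.rpow_mul, one_div, inv_mul_cancel₀ hq0.ne', ENNReal.rpow_one]
      simp only [Pi.mul_apply] at hhold
      simp only [heq2, heq3] at hhold
      rw [show (∫⁻ a, g (w - a) ^ (1 / r) * F a * g (w - a) ^ (1 / q))
            = ∫⁻ u, g (w - u) * F u from lintegral_congr fun u => congrFun heq1 u,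
        hshift_left w] at hhold
      calc (∫⁻ u, g (w - u) * F u) ^ r
          ≤ ((∫⁻ u, g (w - u) * F u ^ r) ^ (1 / r) * (∫⁻ u, g u) ^ (1 / q)) ^ r :=
            ENNReal.rpow_le_rpow hhold hr0.le
        _ = (∫⁻ u, g (w - u) * F u ^ r) ^ ((1 / r) * r) * (∫⁻ u, g u) ^ ((1 / q) * r) := by
            rw [ENNReal.mul_rpow_of_nonneg _ _ hr0.le, ← ENNReal.rpow_mul, ← ENNReal.rpow_mul]
        _ = (∫⁻ u, g u) ^ (r - 1) * ∫⁻ u, g (w - u) * F u ^ r := by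
            rw [one_div, inv_mul_cancel₀ hr0.ne', ENNReal.rpow_one,
              show (1 / q) * r = r / q by ring, hq.div_conj_eq_sub_one, mul_comm]
    calc ∫⁻ w, (∫⁻ u, g (w - u) * F u) ^ r
        ≤ ∫⁻ w, (∫⁻ u, g u) ^ (r - 1) * ∫⁻ u, g (w - u) * (F u) ^ r := lintegral_mono hpt
      _ = (∫⁻ u, g u) ^ (r - 1) * ∫⁻ w, ∫⁻ u, g (w - u) * (F u) ^ r :=
          lintegral_const_mul' _ _ (ENNReal.rpow_ne_top_of_nonneg (by linarith) hItop)
      _ = (∫⁻ u, g u) ^ (r - 1) * ((∫⁻ u, g u) * ∫⁻ u, (F u) ^ r) := by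
          rw [tonelli _ (hF.pow_const _)]
      _ = (∫⁻ u, g u) ^ r * ∫⁻ u, (F u) ^ r := by
          rw [← mul_assoc]
          congr 1
          calc (∫⁻ u, g u) ^ (r - 1) * (∫⁻ u, g u)
              = (∫⁻ u, g u) ^ (r - 1) * (∫⁻ u, g u) ^ (1:ℝ) := by rw [ENNReal.rpow_one]
            _ = (∫⁻ u, g u) ^ (r - 1 + 1) := (ENNReal.rpow_add _ _ hI0 hItop).symm
            _ = (∫⁻ u, g u) ^ r := by norm_num

theorem sparse_kernel_weighted_Lp_bounded (d : ℕ)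
    (χ ψ : EuclideanSpace ℝ (Fin (2 * d)) → EuclideanSpace ℝ (Fin (2 * d)))
    (hmp : MeasurePreserving χ volume volume)
    (K K' : NNReal) (hχ : LipschitzWith K χ) (hψ : LipschitzWith K' ψ)
    (hl : Function.LeftInverse ψ χ) (hr : Function.RightInverse ψ χ)
    (Kf : EuclideanSpace ℝ (Fin (2 * d)) → EuclideanSpace ℝ (Fin (2 * d)) → ℂ)
    (hKm : Measurable (Function.uncurry Kf))
    (C ε : ℝ) (hC : 0 < C) (hε : 0 < ε)
    (hK : ∀ w z, ‖Kf w z‖ ≤ C * Real.exp (-ε * ‖w - χ z‖))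
    (m v : EuclideanSpace ℝ (Fin (2 * d)) → ℝ)
    (hm : ∀ z, 0 < m z) (hv : ∀ z, 0 < v z)
    (hmmeas : Measurable m) (hvmeas : Measurable v)
    (C₀ : ℝ) (hC₀ : 0 < C₀)
    (hmod : ∀ z ζ, m (z + ζ) ≤ C₀ * v z * m ζ)
    (hvint : Integrable (fun z => v z * Real.exp (-ε * ‖z‖)))
    (p : ENNReal) (hp : 1 ≤ p) :
    ∃ Cb : ENNReal, Cb ≠ ⊤ ∧
      ∀ G : EuclideanSpace ℝ (Fin (2 * d)) → ℂ, AEStronglyMeasurable G volume →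
        eLpNorm (fun w => (m w : ℂ) * ∫ z, Kf w z * G z) p volume ≤
          Cb * eLpNorm (fun z => (m (χ z) : ℂ) * G z) p volume := by
  classical
  have χcont := hχ.continuous
  have ψcont := hψ.continuous
  let χh : EuclideanSpace ℝ (Fin (2 * d)) ≃ₜ EuclideanSpace ℝ (Fin (2 * d)) :=
    { toFun := χ, invFun := ψ, left_inv := hl, right_inv := hr,
      continuous_toFun := χcont, continuous_invFun := ψcont }
  have hemb : MeasurableEmbedding χ := χh.toMeasurableEquiv.measurableEmbedding
  have hψmp : MeasurePreserving ψ volume volume :=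
    MeasurePreserving.symm χh.toMeasurableEquiv hmp
  set g : EuclideanSpace ℝ (Fin (2 * d)) → ℝ≥0∞ :=
    fun u => ENNReal.ofReal (C * C₀ * (v u * Real.exp (-ε * ‖u‖))) with hgdef
  have hgmeas : Measurable g := by
    apply ENNReal.measurable_ofReal.comp
    exact measurable_const.mul (hvmeas.mul ((measurable_norm.const_mul (-ε)).exp))
  have hCC₀ : (0:ℝ) ≤ C * C₀ := by positivity
  have hIeq : (∫⁻ u, g u) =
      ENNReal.ofReal (C * C₀) * ∫⁻ u, ENNReal.ofReal (v u * Real.exp (-ε * ‖u‖)) := by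
    rw [← lintegral_const_mul' _ _ ENNReal.ofReal_ne_top]
    exact lintegral_congr fun u => by rw [← ENNReal.ofReal_mul hCC₀]
  have hItop : (∫⁻ u, g u) ≠ ⊤ := by
    rw [hIeq]
    refine ENNReal.mul_ne_top ENNReal.ofReal_ne_top ?_
    refine ne_of_lt (lt_of_le_of_lt (lintegral_mono fun u => ?_) hvint.2)
    exact (ENNReal.ofReal_le_ofReal (le_abs_self _)).trans_eq
      (Real.enorm_eq_ofReal_abs _).symm
  have hI0 : (∫⁻ u, g u) ≠ 0 := by
    intro h
    rw [lintegral_eq_zero_iff hgmeas] at h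
    have h2 : ∀ᵐ x : EuclideanSpace ℝ (Fin (2 * d)) ∂volume, False :=
      h.mono fun x hx => absurd hx (ENNReal.ofReal_pos.2
        (mul_pos (mul_pos hC hC₀) (mul_pos (hv x) (Real.exp_pos _)))).ne'
    have h3 : (volume : Measure (EuclideanSpace ℝ (Fin (2 * d)))) Set.univ = 0 := by
      simpa [ae_iff] using h2
    exact (isOpen_univ.measure_pos
      (volume : Measure (EuclideanSpace ℝ (Fin (2 * d)))) ⟨0, trivial⟩).ne' h3
  refine ⟨∫⁻ u, g u, hItop, ?_⟩
  have main : ∀ G : EuclideanSpace ℝ (Fin (2 * d)) → ℂ, StronglyMeasurable G →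
      eLpNorm (fun w => (m w : ℂ) * ∫ z, Kf w z * G z) p volume ≤
        (∫⁻ u, g u) * eLpNorm (fun z => (m (χ z) : ℂ) * G z) p volume := by
    intro G hGsm
    set H : EuclideanSpace ℝ (Fin (2 * d)) → ℝ≥0∞ :=
      fun z => (‖(m (χ z) : ℂ) * G z‖₊ : ℝ≥0∞) with hHdef
    have hHmeas : Measurable H :=
      ((Complex.measurable_ofReal.comp (hmmeas.comp χcont.measurable)).mul
        hGsm.measurable).enorm
    set F : EuclideanSpace ℝ (Fin (2 * d)) → ℝ≥0∞ := fun u => H (ψ u) with hFdef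
    have hFmeas : Measurable F := hHmeas.comp ψcont.measurable
    have hFcomp : ∀ z, F (χ z) = H z := fun z => by
      rw [hFdef]; simp only [hl z]
    have hptw : ∀ w z, (‖(m w : ℂ)‖₊ : ℝ≥0∞) * (‖Kf w z * G z‖₊ : ℝ≥0∞) ≤
        g (w - χ z) * H z := by
      intro w z
      have hmw : (‖(m w : ℂ)‖₊ : ℝ≥0∞) = ENNReal.ofReal (m w) := by
        rw [← enorm_eq_nnnorm, ← ofReal_norm, Complex.norm_real, Real.norm_of_nonneg (hm w).le]
      have hKw : (‖Kf w z‖₊ : ℝ≥0∞) = ENNReal.ofReal (‖Kf w z‖) := by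
        rw [← enorm_eq_nnnorm, ← ofReal_norm]
      have hreal : m w * ‖Kf w z‖ ≤
          C * C₀ * (v (w - χ z) * Real.exp (-ε * ‖w - χ z‖)) * m (χ z) := by
        have h1 : m w ≤ C₀ * v (w - χ z) * m (χ z) := by
          have := hmod (w - χ z) (χ z)
          rwa [show w - χ z + χ z = w from by abel] at this
        calc m w * ‖Kf w z‖
            ≤ (C₀ * v (w - χ z) * m (χ z)) * (C * Real.exp (-ε * ‖w - χ z‖)) :=
              mul_le_mul h1 (hK w z) (norm_nonneg _)
                (mul_nonneg (mul_nonneg hC₀.le (hv _).le) (hm _).le)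
          _ = C * C₀ * (v (w - χ z) * Real.exp (-ε * ‖w - χ z‖)) * m (χ z) := by ring
      have hHz : H z = ENNReal.ofReal (m (χ z)) * (‖G z‖₊ : ℝ≥0∞) := by
        rw [hHdef]
        simp only [nnnorm_mul, ENNReal.coe_mul]
        congr 1
        rw [← enorm_eq_nnnorm, ← ofReal_norm, Complex.norm_real,
          Real.norm_of_nonneg (hm (χ z)).le]
      calc (‖(m w : ℂ)‖₊ : ℝ≥0∞) * (‖Kf w z * G z‖₊ : ℝ≥0∞)
          = ENNReal.ofReal (m w * ‖Kf w z‖) * (‖G z‖₊ : ℝ≥0∞) := by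
            rw [nnnorm_mul, ENNReal.coe_mul, hmw, hKw, ← mul_assoc,
              ← ENNReal.ofReal_mul (hm w).le]
        _ ≤ ENNReal.ofReal (C * C₀ * (v (w - χ z) * Real.exp (-ε * ‖w - χ z‖)) * m (χ z)) *
              (‖G z‖₊ : ℝ≥0∞) :=
            mul_le_mul_left (ENNReal.ofReal_le_ofReal hreal) _
        _ = g (w - χ z) * H z := by
            have hA : (0:ℝ) ≤ C * C₀ * (v (w - χ z) * Real.exp (-ε * ‖w - χ z‖)) :=
              mul_nonneg (mul_nonneg hC.le hC₀.le)
                (mul_nonneg (hv _).le (Real.exp_pos _).le)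
            rw [hHz, ← mul_assoc (g (w - χ z)) (ENNReal.ofReal (m (χ z))) ((‖G z‖₊ : ℝ≥0∞))]
            congr 1
            rw [show g (w - χ z) = ENNReal.ofReal
                (C * C₀ * (v (w - χ z) * Real.exp (-ε * ‖w - χ z‖))) from rfl,
              ← ENNReal.ofReal_mul hA]
    have key : ∀ w, (‖(m w : ℂ) * ∫ z, Kf w z * G z‖₊ : ℝ≥0∞) ≤
        ∫⁻ u, g (w - u) * F u := by
      intro w
      have s3 : ∫⁻ z, g (w - χ z) * H z = ∫⁻ u, g (w - u) * F u := by
        rw [← hmp.lintegral_comp_emb hemb (fun u => g (w - u) * F u)]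
        exact lintegral_congr fun z => by rw [hFcomp z]
      calc (‖(m w : ℂ) * ∫ z, Kf w z * G z‖₊ : ℝ≥0∞)
          ≤ (‖(m w : ℂ)‖₊ : ℝ≥0∞) * ∫⁻ z, (‖Kf w z * G z‖₊ : ℝ≥0∞) := by
            rw [nnnorm_mul, ENNReal.coe_mul]
            exact mul_le_mul_right (enorm_integral_le_lintegral_enorm _) _
        _ = ∫⁻ z, (‖(m w : ℂ)‖₊ : ℝ≥0∞) * (‖Kf w z * G z‖₊ : ℝ≥0∞) :=
            (lintegral_const_mul' _ _ ENNReal.coe_ne_top).symm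
        _ ≤ ∫⁻ z, g (w - χ z) * H z := lintegral_mono fun z => hptw w z
        _ = ∫⁻ u, g (w - u) * F u := s3
    have hp0 : p ≠ 0 := (lt_of_lt_of_le zero_lt_one hp).ne'
    rcases eq_or_ne p ⊤ with hptop | hptop
    · subst hptop
      rw [eLpNorm_exponent_top, eLpNorm_exponent_top]
      have hHS : ∀ᵐ z ∂(volume : Measure (EuclideanSpace ℝ (Fin (2 * d)))),
          H z ≤ eLpNormEssSup (fun z => (m (χ z) : ℂ) * G z) volume :=
        ae_le_eLpNormEssSup
      have hFS : ∀ᵐ u ∂(volume : Measure (EuclideanSpace ℝ (Fin (2 * d)))),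
          F u ≤ eLpNormEssSup (fun z => (m (χ z) : ℂ) * G z) volume :=
        hψmp.quasiMeasurePreserving.ae hHS
      have hb : ∀ w, (‖(m w : ℂ) * ∫ z, Kf w z * G z‖₊ : ℝ≥0∞) ≤
          (∫⁻ u, g u) * eLpNormEssSup (fun z => (m (χ z) : ℂ) * G z) volume := by
        intro w
        refine (key w).trans ?_
        calc ∫⁻ u, g (w - u) * F u
            ≤ ∫⁻ u, g (w - u) * eLpNormEssSup (fun z => (m (χ z) : ℂ) * G z) volume :=
              lintegral_mono_ae (hFS.mono fun u hu => mul_le_mul_right hu _)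
          _ = (∫⁻ u, g (w - u)) * eLpNormEssSup (fun z => (m (χ z) : ℂ) * G z) volume :=
              lintegral_mul_const _ (hgmeas.comp (measurable_const.sub measurable_id))
          _ = (∫⁻ u, g u) * eLpNormEssSup (fun z => (m (χ z) : ℂ) * G z) volume := by
              rw [(Measure.measurePreserving_sub_left volume w).lintegral_comp hgmeas]
      exact essSup_le_of_ae_le _ (Filter.Eventually.of_forall hb)
    · have hr1 : (1:ℝ) ≤ p.toReal := by
        rw [← ENNReal.toReal_one]
        exact ENNReal.toReal_mono hptop hp
      have hr0 : (0:ℝ) < p.toReal := lt_of_lt_of_le one_pos hr1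
      rw [eLpNorm_eq_lintegral_rpow_enorm_toReal hp0 hptop,
        eLpNorm_eq_lintegral_rpow_enorm_toReal hp0 hptop]
      have hchg : ∫⁻ u, F u ^ p.toReal = ∫⁻ z, H z ^ p.toReal := by
        rw [← hmp.lintegral_comp_emb hemb (fun u => F u ^ p.toReal)]
        exact lintegral_congr fun z => by rw [hFcomp z]
      have h1 : ∫⁻ w, (‖(m w : ℂ) * ∫ z, Kf w z * G z‖₊ : ℝ≥0∞) ^ p.toReal ≤
          (∫⁻ u, g u) ^ p.toReal * ∫⁻ z, H z ^ p.toReal := by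
        calc ∫⁻ w, (‖(m w : ℂ) * ∫ z, Kf w z * G z‖₊ : ℝ≥0∞) ^ p.toReal
            ≤ ∫⁻ w, (∫⁻ u, g (w - u) * F u) ^ p.toReal :=
              lintegral_mono fun w => ENNReal.rpow_le_rpow (key w) hr0.le
          _ ≤ (∫⁻ u, g u) ^ p.toReal * ∫⁻ u, F u ^ p.toReal :=
              schur_step g F hgmeas hFmeas hI0 hItop hr1
          _ = (∫⁻ u, g u) ^ p.toReal * ∫⁻ z, H z ^ p.toReal := by rw [hchg]
      calc (∫⁻ w, (‖(m w : ℂ) * ∫ z, Kf w z * G z‖₊ : ℝ≥0∞) ^ p.toReal) ^ (1 / p.toReal)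
          ≤ ((∫⁻ u, g u) ^ p.toReal * ∫⁻ z, H z ^ p.toReal) ^ (1 / p.toReal) :=
            ENNReal.rpow_le_rpow h1 (by positivity)
        _ = (∫⁻ u, g u) * (∫⁻ z, H z ^ p.toReal) ^ (1 / p.toReal) := by
            rw [ENNReal.mul_rpow_of_nonneg _ _ (by positivity), ← ENNReal.rpow_mul,
              mul_one_div, div_self hr0.ne', ENNReal.rpow_one]
  intro G hG
  have hmk := hG.stronglyMeasurable_mk
  have hae := hG.ae_eq_mk
  have e1 : (fun w => (m w : ℂ) * ∫ z, Kf w z * G z)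
      = fun w => (m w : ℂ) * ∫ z, Kf w z * hG.mk G z := by
    funext w
    congr 1
    exact integral_congr_ae (hae.mono fun z hz => by simp only [hz])
  have e2 : eLpNorm (fun z => (m (χ z) : ℂ) * G z) p volume
      = eLpNorm (fun z => (m (χ z) : ℂ) * hG.mk G z) p volume :=
    eLpNorm_congr_ae (hae.mono fun z hz => by simp only [hz])
  rw [e1, e2]
  exact main _ hmk
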